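/- There is no embedding of the grid graph □_n into the knight graph K_n for any n ≥ 2; that is, for n ≥ 2 there is no injective map f : [n]×[n] → [n]×[n] such that whenever two points of [n]×[n] are at Euclidean distance 1, their images differ by a knight move (|Δx|,|Δy|) = (1,2) or (2,1). -/

import Mathlib

/-- Two points of `ℤ²` are adjacent in the grid graph iff they are at Euclidean distance 1. -/
def gridAdj (a b : ℤ × ℤ) : Prop := |a.1 - b.1| + |a.2 - b.2| = 1

/-- Two points are joined by a `(p,q)`-leaper move iff the absolute values of their
coordinate differences are `p` and `q` in some order. -/
def leapAdj (p q : ℤ) (a b : ℤ × ℤ) : Prop :=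
  (|a.1 - b.1| = p ∧ |a.2 - b.2| = q) ∨ (|a.1 - b.1| = q ∧ |a.2 - b.2| = p)

/-- The board `[n] × [n]` as a subset of `ℤ²`. -/
def box (n : ℕ) : Set (ℤ × ℤ) := {v | 1 ≤ v.1 ∧ v.1 ≤ (n : ℤ) ∧ 1 ≤ v.2 ∧ v.2 ≤ (n : ℤ)}

set_option maxHeartbeats 1000000
set_option linter.unreachableTactic false
set_option linter.unnecessarySeqFocus false
set_option linter.unusedTactic false

lemma gridAdj_iff (a b : ℤ × ℤ) :
    gridAdj a b ↔ (a.1 = b.1 ∧ (a.2 = b.2 + 1 ∨ b.2 = a.2 + 1)) ∨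
      (a.2 = b.2 ∧ (a.1 = b.1 + 1 ∨ b.1 = a.1 + 1)) := by
  unfold gridAdj
  rcases abs_cases (a.1 - b.1) with ⟨h1, h2⟩ | ⟨h1, h2⟩ <;>
    rcases abs_cases (a.2 - b.2) with ⟨h3, h4⟩ | ⟨h3, h4⟩ <;> omega

lemma leapAdj_iff (a b : ℤ × ℤ) :
    leapAdj 1 2 a b ↔ ((a.1 = b.1 + 1 ∨ b.1 = a.1 + 1) ∧ (a.2 = b.2 + 2 ∨ b.2 = a.2 + 2)) ∨
      ((a.1 = b.1 + 2 ∨ b.1 = a.1 + 2) ∧ (a.2 = b.2 + 1 ∨ b.2 = a.2 + 1)) := by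
  unfold leapAdj
  rcases abs_cases (a.1 - b.1) with ⟨h1, h2⟩ | ⟨h1, h2⟩ <;>
    rcases abs_cases (a.2 - b.2) with ⟨h3, h4⟩ | ⟨h3, h4⟩ <;> omega

lemma mem_box_iff {n : ℕ} {v : ℤ × ℤ} :
    v ∈ box n ↔ 1 ≤ v.1 ∧ v.1 ≤ (n : ℤ) ∧ 1 ≤ v.2 ∧ v.2 ≤ (n : ℤ) := Iff.rfl

lemma exists_preimage {n : ℕ} {f : ℤ × ℤ → ℤ × ℤ}
    (hbox : ∀ v ∈ box n, f v ∈ box n) (hinj : Set.InjOn f (box n))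
    {c : ℤ × ℤ} (hc : c ∈ box n) : ∃ v ∈ box n, f v = c := by
  classical
  set B : Finset (ℤ × ℤ) := Finset.Icc (1 : ℤ) n ×ˢ Finset.Icc (1 : ℤ) n with hB
  have hmem : ∀ v : ℤ × ℤ, v ∈ B ↔ v ∈ box n := by
    intro v
    simp [hB, Finset.mem_product, Finset.mem_Icc, mem_box_iff, and_assoc]
  have h := Finset.surj_on_of_inj_on_of_card_le (s := B) (t := B)
    (fun a _ => f a) (fun a ha => (hmem _).2 (hbox a ((hmem _).1 ha)))
    (fun a₁ a₂ ha₁ ha₂ h => hinj ((hmem _).1 ha₁) ((hmem _).1 ha₂) h) le_rfl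
    c ((hmem _).2 hc)
  obtain ⟨v, hv, hfv⟩ := h
  exact ⟨v, (hmem _).1 hv, hfv.symm⟩

lemma inj_ne {n : ℕ} {f : ℤ × ℤ → ℤ × ℤ} (hinj : Set.InjOn f (box n))
    {a b : ℤ × ℤ} (ha : a ∈ box n) (hb : b ∈ box n) (hne : a ≠ b) : f a ≠ f b :=
  fun h => hne (hinj ha hb h)

lemma three_in_pair {a b c q₁ q₂ : ℤ × ℤ} (hab : a ≠ b) (hac : a ≠ c) (hbc : b ≠ c)
    (ha : a = q₁ ∨ a = q₂) (hb : b = q₁ ∨ b = q₂) (hc : c = q₁ ∨ c = q₂) : False := by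
  rcases ha with rfl | rfl <;> rcases hb with rfl | rfl <;> rcases hc with rfl | rfl <;>
    simp_all

/-- the two box-neighbours of a knight corner -/
lemma corner_nbrs {n : ℕ} {c : ℤ × ℤ}
    (hc : (c.1 = 1 ∨ c.1 = (n : ℤ)) ∧ (c.2 = 1 ∨ c.2 = (n : ℤ))) :
    ∃ q₁ q₂ : ℤ × ℤ, ∀ r ∈ box n, leapAdj 1 2 c r → r = q₁ ∨ r = q₂ := by
  obtain ⟨h1 | h1, h2 | h2⟩ := hc
  · exact ⟨(2, 3), (3, 2), by
      intro r hr h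
      rw [leapAdj_iff] at h
      rw [mem_box_iff] at hr
      simp only [Prod.ext_iff]
      omega⟩
  · exact ⟨(2, (n : ℤ) - 2), (3, (n : ℤ) - 1), by
      intro r hr h
      rw [leapAdj_iff] at h
      rw [mem_box_iff] at hr
      simp only [Prod.ext_iff]
      omega⟩
  · exact ⟨((n : ℤ) - 1, 3), ((n : ℤ) - 2, 2), by
      intro r hr h
      rw [leapAdj_iff] at h
      rw [mem_box_iff] at hr
      simp only [Prod.ext_iff]
      omega⟩
  · exact ⟨((n : ℤ) - 2, (n : ℤ) - 1), ((n : ℤ) - 1, (n : ℤ) - 2), by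
      intro r hr h
      rw [leapAdj_iff] at h
      rw [mem_box_iff] at hr
      simp only [Prod.ext_iff]
      omega⟩

/-- the preimage of a knight corner is a grid corner -/
lemma preimage_corner {n : ℕ} (hn : 2 ≤ n) {f : ℤ × ℤ → ℤ × ℤ}
    (hbox : ∀ v ∈ box n, f v ∈ box n) (hinj : Set.InjOn f (box n))
    (hadj : ∀ a ∈ box n, ∀ b ∈ box n, gridAdj a b → leapAdj 1 2 (f a) (f b))
    {c u : ℤ × ℤ} (hc : (c.1 = 1 ∨ c.1 = (n : ℤ)) ∧ (c.2 = 1 ∨ c.2 = (n : ℤ)))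
    (hu : u ∈ box n) (hfu : f u = c) :
    (u.1 = 1 ∨ u.1 = (n : ℤ)) ∧ (u.2 = 1 ∨ u.2 = (n : ℤ)) := by
  obtain ⟨q₁, q₂, hq⟩ := corner_nbrs (n := n) hc
  rw [mem_box_iff] at hu
  -- generic step : three distinct neighbours of u give a contradiction
  have key : ∀ p₁ p₂ p₃ : ℤ × ℤ, p₁ ∈ box n → p₂ ∈ box n → p₃ ∈ box n →
      p₁ ≠ p₂ → p₁ ≠ p₃ → p₂ ≠ p₃ →
      gridAdj u p₁ → gridAdj u p₂ → gridAdj u p₃ → False := by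
    intro p₁ p₂ p₃ hp₁ hp₂ hp₃ h12 h13 h23 g1 g2 g3
    have hubox : u ∈ box n := by rw [mem_box_iff]; exact hu
    have i1 : f p₁ = q₁ ∨ f p₁ = q₂ := by
      refine hq _ (hbox _ hp₁) ?_
      have := hadj u hubox p₁ hp₁ g1; rwa [hfu] at this
    have i2 : f p₂ = q₁ ∨ f p₂ = q₂ := by
      refine hq _ (hbox _ hp₂) ?_
      have := hadj u hubox p₂ hp₂ g2; rwa [hfu] at this
    have i3 : f p₃ = q₁ ∨ f p₃ = q₂ := by
      refine hq _ (hbox _ hp₃) ?_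
      have := hadj u hubox p₃ hp₃ g3; rwa [hfu] at this
    exact three_in_pair (inj_ne hinj hp₁ hp₂ h12) (inj_ne hinj hp₁ hp₃ h13)
      (inj_ne hinj hp₂ hp₃ h23) i1 i2 i3
  by_contra hcon
  have hn' : (2 : ℤ) ≤ (n : ℤ) := by exact_mod_cast hn
  rcases not_and_or.1 hcon with h | h
  · push_neg at h
    -- 1 < u.1 < n
    rcases le_or_gt u.2 ((n : ℤ) - 1) with hv | hv
    · exact key (u.1 - 1, u.2) (u.1 + 1, u.2) (u.1, u.2 + 1)
        (by simp [mem_box_iff] <;> omega)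
        (by simp [mem_box_iff] <;> omega)
        (by simp [mem_box_iff] <;> omega)
        (by simp [ne_eq, Prod.ext_iff] <;> omega) (by simp [ne_eq, Prod.ext_iff] <;> omega)
        (by simp [ne_eq, Prod.ext_iff] <;> omega)
        (by simp [gridAdj_iff] <;> omega) (by simp [gridAdj_iff] <;> omega)
        (by simp [gridAdj_iff] <;> omega)
    · exact key (u.1 - 1, u.2) (u.1 + 1, u.2) (u.1, u.2 - 1)
        (by simp [mem_box_iff] <;> omega)
        (by simp [mem_box_iff] <;> omega)
        (by simp [mem_box_iff] <;> omega)
        (by simp [ne_eq, Prod.ext_iff] <;> omega) (by simp [ne_eq, Prod.ext_iff] <;> omega)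
        (by simp [ne_eq, Prod.ext_iff] <;> omega)
        (by simp [gridAdj_iff] <;> omega) (by simp [gridAdj_iff] <;> omega)
        (by simp [gridAdj_iff] <;> omega)
  · push_neg at h
    rcases le_or_gt u.1 ((n : ℤ) - 1) with hv | hv
    · exact key (u.1, u.2 - 1) (u.1, u.2 + 1) (u.1 + 1, u.2)
        (by simp [mem_box_iff] <;> omega)
        (by simp [mem_box_iff] <;> omega)
        (by simp [mem_box_iff] <;> omega)
        (by simp [ne_eq, Prod.ext_iff] <;> omega) (by simp [ne_eq, Prod.ext_iff] <;> omega)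
        (by simp [ne_eq, Prod.ext_iff] <;> omega)
        (by simp [gridAdj_iff] <;> omega) (by simp [gridAdj_iff] <;> omega)
        (by simp [gridAdj_iff] <;> omega)
    · exact key (u.1, u.2 - 1) (u.1, u.2 + 1) (u.1 - 1, u.2)
        (by simp [mem_box_iff] <;> omega)
        (by simp [mem_box_iff] <;> omega)
        (by simp [mem_box_iff] <;> omega)
        (by simp [ne_eq, Prod.ext_iff] <;> omega) (by simp [ne_eq, Prod.ext_iff] <;> omega)
        (by simp [ne_eq, Prod.ext_iff] <;> omega)
        (by simp [gridAdj_iff] <;> omega) (by simp [gridAdj_iff] <;> omega)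
        (by simp [gridAdj_iff] <;> omega)

/-- every grid corner maps to a knight corner -/
lemma corner_to_corner {n : ℕ} (hn : 2 ≤ n) {f : ℤ × ℤ → ℤ × ℤ}
    (hbox : ∀ v ∈ box n, f v ∈ box n) (hinj : Set.InjOn f (box n))
    (hadj : ∀ a ∈ box n, ∀ b ∈ box n, gridAdj a b → leapAdj 1 2 (f a) (f b))
    {w : ℤ × ℤ} (hw : w ∈ box n)
    (hwc : (w.1 = 1 ∨ w.1 = (n : ℤ)) ∧ (w.2 = 1 ∨ w.2 = (n : ℤ))) :
    ((f w).1 = 1 ∨ (f w).1 = (n : ℤ)) ∧ ((f w).2 = 1 ∨ (f w).2 = (n : ℤ)) := by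
  classical
  have hn' : (2 : ℤ) ≤ (n : ℤ) := by exact_mod_cast hn
  have hA : ((1 : ℤ), (1 : ℤ)) ∈ box n := by rw [mem_box_iff]; constructor <;> omega
  have hB : ((1 : ℤ), (n : ℤ)) ∈ box n := by rw [mem_box_iff]; constructor <;> omega
  have hC : ((n : ℤ), (1 : ℤ)) ∈ box n := by rw [mem_box_iff]; constructor <;> omega
  have hD : ((n : ℤ), (n : ℤ)) ∈ box n := by rw [mem_box_iff]; constructor <;> omega
  obtain ⟨u₁, hu₁, hf₁⟩ := exists_preimage hbox hinj hA
  obtain ⟨u₂, hu₂, hf₂⟩ := exists_preimage hbox hinj hB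
  obtain ⟨u₃, hu₃, hf₃⟩ := exists_preimage hbox hinj hC
  obtain ⟨u₄, hu₄, hf₄⟩ := exists_preimage hbox hinj hD
  have hc₁ := preimage_corner hn hbox hinj hadj (c := ((1:ℤ),(1:ℤ))) (by constructor <;> simp) hu₁ hf₁
  have hc₂ := preimage_corner hn hbox hinj hadj (c := ((1:ℤ),(n:ℤ))) (by constructor <;> simp) hu₂ hf₂
  have hc₃ := preimage_corner hn hbox hinj hadj (c := ((n:ℤ),(1:ℤ))) (by constructor <;> simp) hu₃ hf₃
  have hc₄ := preimage_corner hn hbox hinj hadj (c := ((n:ℤ),(n:ℤ))) (by constructor <;> simp) hu₄ hf₄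
  have ne12 : u₁ ≠ u₂ := by
    intro h; rw [h] at hf₁
    have := hf₂.symm.trans hf₁
    simp [Prod.ext_iff] at this; omega
  have ne13 : u₁ ≠ u₃ := by
    intro h; rw [h] at hf₁
    have := hf₃.symm.trans hf₁
    simp [Prod.ext_iff] at this; omega
  have ne14 : u₁ ≠ u₄ := by
    intro h; rw [h] at hf₁
    have := hf₄.symm.trans hf₁
    simp [Prod.ext_iff] at this; omega
  have ne23 : u₂ ≠ u₃ := by
    intro h; rw [h] at hf₂
    have := hf₃.symm.trans hf₂
    simp [Prod.ext_iff] at this; omega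
  have ne24 : u₂ ≠ u₄ := by
    intro h; rw [h] at hf₂
    have := hf₄.symm.trans hf₂
    simp [Prod.ext_iff] at this; omega
  have ne34 : u₃ ≠ u₄ := by
    intro h; rw [h] at hf₃
    have := hf₄.symm.trans hf₃
    simp [Prod.ext_iff] at this; omega
  set C : Finset (ℤ × ℤ) := {((1:ℤ),(1:ℤ)), ((1:ℤ),(n:ℤ)), ((n:ℤ),(1:ℤ)), ((n:ℤ),(n:ℤ))} with hCdef
  set U : Finset (ℤ × ℤ) := {u₁, u₂, u₃, u₄} with hUdef
  have hCcard : C.card ≤ 4 := by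
    apply le_trans (Finset.card_insert_le _ _)
    apply Nat.succ_le_succ
    apply le_trans (Finset.card_insert_le _ _)
    apply Nat.succ_le_succ
    apply le_trans (Finset.card_insert_le _ _)
    apply Nat.succ_le_succ
    simp
  have hUcard : U.card = 4 := by
    rw [hUdef]
    rw [Finset.card_insert_of_notMem (by simp [ne12, ne13, ne14])]
    rw [Finset.card_insert_of_notMem (by simp [ne23, ne24])]
    rw [Finset.card_insert_of_notMem (by simp [ne34])]
    rfl
  have hsub : U ⊆ C := by
    intro x hx
    rw [hUdef] at hx
    simp only [Finset.mem_insert, Finset.mem_singleton] at hx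
    rcases hx with rfl | rfl | rfl | rfl
    · obtain ⟨h1 | h1, h2 | h2⟩ := hc₁ <;>
        simp [hCdef, Finset.mem_insert, Prod.ext_iff, h1, h2]
    · obtain ⟨h1 | h1, h2 | h2⟩ := hc₂ <;>
        simp [hCdef, Finset.mem_insert, Prod.ext_iff, h1, h2]
    · obtain ⟨h1 | h1, h2 | h2⟩ := hc₃ <;>
        simp [hCdef, Finset.mem_insert, Prod.ext_iff, h1, h2]
    · obtain ⟨h1 | h1, h2 | h2⟩ := hc₄ <;>
        simp [hCdef, Finset.mem_insert, Prod.ext_iff, h1, h2]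
  have hUC : U = C := Finset.eq_of_subset_of_card_le hsub (by omega)
  have hwC : w ∈ C := by
    obtain ⟨h1 | h1, h2 | h2⟩ := hwc <;>
      simp [hCdef, Finset.mem_insert, Prod.ext_iff, h1, h2]
  rw [← hUC, hUdef] at hwC
  simp only [Finset.mem_insert, Finset.mem_singleton] at hwC
  rcases hwC with rfl | rfl | rfl | rfl
  · rw [hf₁]; constructor <;> simp
  · rw [hf₂]; constructor <;> simp
  · rw [hf₃]; constructor <;> simp
  · rw [hf₄]; constructor <;> simp

lemma nbrs12 {n : ℕ} : ∀ r ∈ box n, leapAdj 1 2 ((1 : ℤ), (2 : ℤ)) r →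
    r = ((2:ℤ),(4:ℤ)) ∨ r = ((3:ℤ),(1:ℤ)) ∨ r = ((3:ℤ),(3:ℤ)) := by
  intro r hr h
  rw [leapAdj_iff] at h
  rw [mem_box_iff] at hr
  simp only [Prod.ext_iff]
  omega

lemma nbrs21 {n : ℕ} : ∀ r ∈ box n, leapAdj 1 2 ((2 : ℤ), (1 : ℤ)) r →
    r = ((4:ℤ),(2:ℤ)) ∨ r = ((1:ℤ),(3:ℤ)) ∨ r = ((3:ℤ),(3:ℤ)) := by
  intro r hr h
  rw [leapAdj_iff] at h
  rw [mem_box_iff] at hr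
  simp only [Prod.ext_iff]
  omega

lemma four_in_three {a b c d q₁ q₂ q₃ : ℤ × ℤ}
    (hab : a ≠ b) (hac : a ≠ c) (had : a ≠ d) (hbc : b ≠ c) (hbd : b ≠ d) (hcd : c ≠ d)
    (ha : a = q₁ ∨ a = q₂ ∨ a = q₃) (hb : b = q₁ ∨ b = q₂ ∨ b = q₃)
    (hc : c = q₁ ∨ c = q₂ ∨ c = q₃) (hd : d = q₁ ∨ d = q₂ ∨ d = q₃) : False := by
  rcases ha with rfl | rfl | rfl <;> rcases hb with rfl | rfl | rfl <;>
    rcases hc with rfl | rfl | rfl <;> rcases hd with rfl | rfl | rfl <;> simp_all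

/-- the preimage of a square with only three box-neighbours lies on the border -/
lemma border_of_three {n : ℕ} {f : ℤ × ℤ → ℤ × ℤ}
    (hbox : ∀ v ∈ box n, f v ∈ box n) (hinj : Set.InjOn f (box n))
    (hadj : ∀ a ∈ box n, ∀ b ∈ box n, gridAdj a b → leapAdj 1 2 (f a) (f b))
    {c q₁ q₂ q₃ : ℤ × ℤ} (hq : ∀ r ∈ box n, leapAdj 1 2 c r → r = q₁ ∨ r = q₂ ∨ r = q₃)
    {b : ℤ × ℤ} (hb : b ∈ box n) (hfb : f b = c) :
    b.1 = 1 ∨ b.1 = (n : ℤ) ∨ b.2 = 1 ∨ b.2 = (n : ℤ) := by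
  by_contra hcon
  push_neg at hcon
  obtain ⟨h1, h2, h3, h4⟩ := hcon
  rw [mem_box_iff] at hb
  have m1 : (b.1 - 1, b.2) ∈ box n := by simp [mem_box_iff] <;> omega
  have m2 : (b.1 + 1, b.2) ∈ box n := by simp [mem_box_iff] <;> omega
  have m3 : (b.1, b.2 - 1) ∈ box n := by simp [mem_box_iff] <;> omega
  have m4 : (b.1, b.2 + 1) ∈ box n := by simp [mem_box_iff] <;> omega
  have hbb : b ∈ box n := by rw [mem_box_iff]; exact ⟨hb.1, hb.2.1, hb.2.2.1, hb.2.2.2⟩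
  have i1 : f (b.1 - 1, b.2) = q₁ ∨ f (b.1 - 1, b.2) = q₂ ∨ f (b.1 - 1, b.2) = q₃ := by
    refine hq _ (hbox _ m1) ?_
    have := hadj b hbb _ m1 (by simp [gridAdj_iff] <;> omega); rwa [hfb] at this
  have i2 : f (b.1 + 1, b.2) = q₁ ∨ f (b.1 + 1, b.2) = q₂ ∨ f (b.1 + 1, b.2) = q₃ := by
    refine hq _ (hbox _ m2) ?_
    have := hadj b hbb _ m2 (by simp [gridAdj_iff] <;> omega); rwa [hfb] at this
  have i3 : f (b.1, b.2 - 1) = q₁ ∨ f (b.1, b.2 - 1) = q₂ ∨ f (b.1, b.2 - 1) = q₃ := by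
    refine hq _ (hbox _ m3) ?_
    have := hadj b hbb _ m3 (by simp [gridAdj_iff] <;> omega); rwa [hfb] at this
  have i4 : f (b.1, b.2 + 1) = q₁ ∨ f (b.1, b.2 + 1) = q₂ ∨ f (b.1, b.2 + 1) = q₃ := by
    refine hq _ (hbox _ m4) ?_
    have := hadj b hbb _ m4 (by simp [gridAdj_iff] <;> omega); rwa [hfb] at this
  exact four_in_three
    (inj_ne hinj m1 m2 (by simp [ne_eq, Prod.ext_iff] <;> omega))
    (inj_ne hinj m1 m3 (by simp [ne_eq, Prod.ext_iff] <;> omega))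
    (inj_ne hinj m1 m4 (by simp [ne_eq, Prod.ext_iff] <;> omega))
    (inj_ne hinj m2 m3 (by simp [ne_eq, Prod.ext_iff] <;> omega))
    (inj_ne hinj m2 m4 (by simp [ne_eq, Prod.ext_iff] <;> omega))
    (inj_ne hinj m3 m4 (by simp [ne_eq, Prod.ext_iff] <;> omega))
    i1 i2 i3 i4

lemma corner_not_adj_12_21 {n : ℕ} (hn : 4 ≤ n) {p q : ℤ × ℤ}
    (hp : (p.1 = 1 ∨ p.1 = (n : ℤ)) ∧ (p.2 = 1 ∨ p.2 = (n : ℤ)))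
    (hq : q = ((1:ℤ),(2:ℤ)) ∨ q = ((2:ℤ),(1:ℤ))) (h : leapAdj 1 2 p q) : False := by
  have hn' : (4 : ℤ) ≤ (n : ℤ) := by exact_mod_cast hn
  rw [leapAdj_iff] at h
  rcases hq with rfl | rfl <;> obtain ⟨h1 | h1, h2 | h2⟩ := hp <;> simp_all <;> omega

lemma gamma_contradiction {γ α β : ℤ × ℤ}
    (h3 : leapAdj 1 2 ((3:ℤ),(3:ℤ)) γ)
    (hne1 : γ ≠ ((1:ℤ),(2:ℤ))) (hne2 : γ ≠ ((2:ℤ),(1:ℤ)))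
    (hα : α = ((2:ℤ),(4:ℤ)) ∨ α = ((3:ℤ),(1:ℤ)))
    (hβ : β = ((4:ℤ),(2:ℤ)) ∨ β = ((1:ℤ),(3:ℤ)))
    (h1 : leapAdj 1 2 γ α) (h2 : leapAdj 1 2 γ β) : False := by
  rw [leapAdj_iff] at h3 h1 h2
  rw [ne_eq, Prod.ext_iff, not_and_or] at hne1 hne2
  rcases hα with rfl | rfl <;> rcases hβ with rfl | rfl <;> simp_all <;> omega

/-- a border vertex mapping to a square whose box-neighbourhood is {q₁,q₂,(3,3)}
has a neighbour mapping to (3,3) -/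
lemma exists_z_nbr {n : ℕ} (hn : 4 ≤ n) {f : ℤ × ℤ → ℤ × ℤ}
    (hbox : ∀ v ∈ box n, f v ∈ box n) (hinj : Set.InjOn f (box n))
    (hadj : ∀ a ∈ box n, ∀ b ∈ box n, gridAdj a b → leapAdj 1 2 (f a) (f b))
    {c q₁ q₂ : ℤ × ℤ}
    (hq : ∀ r ∈ box n, leapAdj 1 2 c r → r = q₁ ∨ r = q₂ ∨ r = ((3:ℤ),(3:ℤ)))
    {b : ℤ × ℤ} (hb : b ∈ box n) (hfb : f b = c)
    (hbd : b.1 = 1 ∨ b.1 = (n : ℤ) ∨ b.2 = 1 ∨ b.2 = (n : ℤ))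
    (hnc : ¬((b.1 = 1 ∨ b.1 = (n : ℤ)) ∧ (b.2 = 1 ∨ b.2 = (n : ℤ)))) :
    ∃ z ∈ box n, gridAdj b z ∧ f z = ((3:ℤ),(3:ℤ)) := by
  have hn' : (4 : ℤ) ≤ (n : ℤ) := by exact_mod_cast hn
  have hbm := hb; rw [mem_box_iff] at hbm
  have pick : ∀ m₁ m₂ m₃ : ℤ × ℤ, m₁ ∈ box n → m₂ ∈ box n → m₃ ∈ box n →
      gridAdj b m₁ → gridAdj b m₂ → gridAdj b m₃ →
      m₁ ≠ m₂ → m₁ ≠ m₃ → m₂ ≠ m₃ →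
      ∃ z ∈ box n, gridAdj b z ∧ f z = ((3:ℤ),(3:ℤ)) := by
    intro m₁ m₂ m₃ hm₁ hm₂ hm₃ g₁ g₂ g₃ n12 n13 n23
    have i₁ : f m₁ = q₁ ∨ f m₁ = q₂ ∨ f m₁ = ((3:ℤ),(3:ℤ)) := by
      refine hq _ (hbox _ hm₁) ?_
      have := hadj b hb _ hm₁ g₁; rwa [hfb] at this
    have i₂ : f m₂ = q₁ ∨ f m₂ = q₂ ∨ f m₂ = ((3:ℤ),(3:ℤ)) := by
      refine hq _ (hbox _ hm₂) ?_
      have := hadj b hb _ hm₂ g₂; rwa [hfb] at this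
    have i₃ : f m₃ = q₁ ∨ f m₃ = q₂ ∨ f m₃ = ((3:ℤ),(3:ℤ)) := by
      refine hq _ (hbox _ hm₃) ?_
      have := hadj b hb _ hm₃ g₃; rwa [hfb] at this
    by_cases e₁ : f m₁ = ((3:ℤ),(3:ℤ))
    · exact ⟨m₁, hm₁, g₁, e₁⟩
    by_cases e₂ : f m₂ = ((3:ℤ),(3:ℤ))
    · exact ⟨m₂, hm₂, g₂, e₂⟩
    by_cases e₃ : f m₃ = ((3:ℤ),(3:ℤ))
    · exact ⟨m₃, hm₃, g₃, e₃⟩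
    have j₁ : f m₁ = q₁ ∨ f m₁ = q₂ := by
      rcases i₁ with h | h | h
      exacts [Or.inl h, Or.inr h, absurd h e₁]
    have j₂ : f m₂ = q₁ ∨ f m₂ = q₂ := by
      rcases i₂ with h | h | h
      exacts [Or.inl h, Or.inr h, absurd h e₂]
    have j₃ : f m₃ = q₁ ∨ f m₃ = q₂ := by
      rcases i₃ with h | h | h
      exacts [Or.inl h, Or.inr h, absurd h e₃]
    exact absurd rfl (fun (_ : (0:ℤ) = 0) => three_in_pair (inj_ne hinj hm₁ hm₂ n12)
      (inj_ne hinj hm₁ hm₃ n13) (inj_ne hinj hm₂ hm₃ n23) j₁ j₂ j₃)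
  rcases hbd with h | h | h | h
  · -- b.1 = 1, so 2 ≤ b.2 ≤ n-1
    exact pick (1, b.2 - 1) (1, b.2 + 1) (2, b.2)
      (by simp [mem_box_iff] <;> omega) (by simp [mem_box_iff] <;> omega)
      (by simp [mem_box_iff] <;> omega)
      (by simp [gridAdj_iff, h] <;> omega) (by simp [gridAdj_iff, h] <;> omega)
      (by simp [gridAdj_iff, h] <;> omega)
      (by simp [ne_eq, Prod.ext_iff] <;> omega) (by simp [ne_eq, Prod.ext_iff] <;> omega)
      (by simp [ne_eq, Prod.ext_iff] <;> omega)
  · exact pick ((n : ℤ), b.2 - 1) ((n : ℤ), b.2 + 1) ((n : ℤ) - 1, b.2)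
      (by simp [mem_box_iff] <;> omega) (by simp [mem_box_iff] <;> omega)
      (by simp [mem_box_iff] <;> omega)
      (by simp [gridAdj_iff, h] <;> omega) (by simp [gridAdj_iff, h] <;> omega)
      (by simp [gridAdj_iff, h] <;> omega)
      (by simp [ne_eq, Prod.ext_iff] <;> omega) (by simp [ne_eq, Prod.ext_iff] <;> omega)
      (by simp [ne_eq, Prod.ext_iff] <;> omega)
  · exact pick (b.1 - 1, 1) (b.1 + 1, 1) (b.1, 2)
      (by simp [mem_box_iff] <;> omega) (by simp [mem_box_iff] <;> omega)
      (by simp [mem_box_iff] <;> omega)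
      (by simp [gridAdj_iff, h] <;> omega) (by simp [gridAdj_iff, h] <;> omega)
      (by simp [gridAdj_iff, h] <;> omega)
      (by simp [ne_eq, Prod.ext_iff] <;> omega) (by simp [ne_eq, Prod.ext_iff] <;> omega)
      (by simp [ne_eq, Prod.ext_iff] <;> omega)
  · exact pick (b.1 - 1, (n : ℤ)) (b.1 + 1, (n : ℤ)) (b.1, (n : ℤ) - 1)
      (by simp [mem_box_iff] <;> omega) (by simp [mem_box_iff] <;> omega)
      (by simp [mem_box_iff] <;> omega)
      (by simp [gridAdj_iff, h] <;> omega) (by simp [gridAdj_iff, h] <;> omega)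
      (by simp [gridAdj_iff, h] <;> omega)
      (by simp [ne_eq, Prod.ext_iff] <;> omega) (by simp [ne_eq, Prod.ext_iff] <;> omega)
      (by simp [ne_eq, Prod.ext_iff] <;> omega)

/-- main case : `n ≥ 4` and the preimage of `(1,2)` lies on the bottom border line -/
lemma main_case {n : ℕ} (hn : 4 ≤ n) {f : ℤ × ℤ → ℤ × ℤ}
    (hbox : ∀ v ∈ box n, f v ∈ box n) (hinj : Set.InjOn f (box n))
    (hadj : ∀ a ∈ box n, ∀ b ∈ box n, gridAdj a b → leapAdj 1 2 (f a) (f b))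
    {b₁ : ℤ × ℤ} (hb₁ : b₁ ∈ box n) (hfb₁ : f b₁ = ((1:ℤ),(2:ℤ))) (hy : b₁.2 = 1) :
    False := by
  have hn2 : 2 ≤ n := by omega
  have hn' : (4 : ℤ) ≤ (n : ℤ) := by exact_mod_cast hn
  have hb₁m := mem_box_iff.1 hb₁
  -- b₁ is not a corner
  have hnc₁ : ¬((b₁.1 = 1 ∨ b₁.1 = (n : ℤ)) ∧ (b₁.2 = 1 ∨ b₁.2 = (n : ℤ))) := by
    intro hc
    have := corner_to_corner hn2 hbox hinj hadj hb₁ hc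
    rw [hfb₁] at this
    simp at this
    omega
  have hx₁ : 2 ≤ b₁.1 ∧ b₁.1 ≤ (n : ℤ) - 1 := by
    rw [not_and_or, not_or, not_or] at hnc₁
    omega
  -- b₂ : the preimage of (2,1)
  have h21box : ((2:ℤ),(1:ℤ)) ∈ box n := by rw [mem_box_iff]; constructor <;> simp <;> omega
  obtain ⟨b₂, hb₂, hfb₂⟩ := exists_preimage hbox hinj h21box
  have hb₂m := mem_box_iff.1 hb₂
  have hnc₂ : ¬((b₂.1 = 1 ∨ b₂.1 = (n : ℤ)) ∧ (b₂.2 = 1 ∨ b₂.2 = (n : ℤ))) := by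
    intro hc
    have := corner_to_corner hn2 hbox hinj hadj hb₂ hc
    rw [hfb₂] at this
    simp at this
    omega
  have hbd₂ := border_of_three hbox hinj hadj (nbrs21 (n := n)) hb₂ hfb₂
  have hne21 : ¬(b₂.1 = b₁.1 ∧ b₂.2 = b₁.2) := by
    intro h
    have : b₂ = b₁ := Prod.ext_iff.2 h
    rw [this, hfb₁] at hfb₂
    simp [Prod.ext_iff] at hfb₂
  -- z : common neighbour mapping to (3,3)
  obtain ⟨z, hz, hgz2, hfz⟩ :=
    exists_z_nbr hn hbox hinj hadj (nbrs21 (n := n)) hb₂ hfb₂ (by tauto) hnc₂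
  obtain ⟨z', hz', hgz1, hfz'⟩ :=
    exists_z_nbr hn hbox hinj hadj (nbrs12 (n := n)) hb₁ hfb₁ (by tauto) hnc₁
  have hz'' : z' = z := hinj hz' hz (hfz'.trans hfz.symm)
  rw [hz''] at hgz1
  have hzm := mem_box_iff.1 hz
  have hncz : ¬((z.1 = 1 ∨ z.1 = (n : ℤ)) ∧ (z.2 = 1 ∨ z.2 = (n : ℤ))) := by
    intro hc
    have := corner_to_corner hn2 hbox hinj hadj hz hc
    rw [hfz] at this
    simp at this
    omega
  rw [not_and_or, not_or, not_or] at hncz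
  rw [gridAdj_iff] at hgz1 hgz2
  have hzc : (z.2 = 1 ∧ (z.1 = b₁.1 - 1 ∨ z.1 = b₁.1 + 1)) ∨ (z.1 = b₁.1 ∧ z.2 = 2) := by
    omega
  rcases hzc with ⟨hz2, hz1⟩ | ⟨hz1, hz2⟩
  · -- z on the bottom line
    have hcA : b₂.2 = 1 ∧ (b₂.1 = z.1 - 1 ∨ b₂.1 = z.1 + 1) := by
      rw [not_and_or, not_or, not_or] at hnc₂
      omega
    -- the three inward neighbours
    have ms₁ : (b₁.1, (2:ℤ)) ∈ box n := by simp [mem_box_iff] <;> omega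
    have ms₂ : (b₂.1, (2:ℤ)) ∈ box n := by simp [mem_box_iff] <;> omega
    have mt : (z.1, (2:ℤ)) ∈ box n := by simp [mem_box_iff] <;> omega
    have gs₁ : gridAdj b₁ (b₁.1, (2:ℤ)) := by simp [gridAdj_iff] <;> omega
    have gs₂ : gridAdj b₂ (b₂.1, (2:ℤ)) := by simp [gridAdj_iff] <;> omega
    have gt : gridAdj z (z.1, (2:ℤ)) := by simp [gridAdj_iff] <;> omega
    have gts₁ : gridAdj (z.1, (2:ℤ)) (b₁.1, (2:ℤ)) := by simp [gridAdj_iff] <;> omega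
    have gts₂ : gridAdj (z.1, (2:ℤ)) (b₂.1, (2:ℤ)) := by simp [gridAdj_iff] <;> omega
    have is₁ : f (b₁.1, (2:ℤ)) = ((2:ℤ),(4:ℤ)) ∨ f (b₁.1, (2:ℤ)) = ((3:ℤ),(1:ℤ)) := by
      have h := hadj b₁ hb₁ _ ms₁ gs₁
      rw [hfb₁] at h
      have h3 : f (b₁.1, (2:ℤ)) ≠ ((3:ℤ),(3:ℤ)) := by
        intro hcon
        have : (b₁.1, (2:ℤ)) = z := hinj ms₁ hz (hcon.trans hfz.symm)
        simp [Prod.ext_iff] at this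
        omega
      rcases nbrs12 _ (hbox _ ms₁) h with h' | h' | h'
      exacts [Or.inl h', Or.inr h', absurd h' h3]
    have is₂ : f (b₂.1, (2:ℤ)) = ((4:ℤ),(2:ℤ)) ∨ f (b₂.1, (2:ℤ)) = ((1:ℤ),(3:ℤ)) := by
      have h := hadj b₂ hb₂ _ ms₂ gs₂
      rw [hfb₂] at h
      have h3 : f (b₂.1, (2:ℤ)) ≠ ((3:ℤ),(3:ℤ)) := by
        intro hcon
        have : (b₂.1, (2:ℤ)) = z := hinj ms₂ hz (hcon.trans hfz.symm)
        simp [Prod.ext_iff] at this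
        omega
      rcases nbrs21 _ (hbox _ ms₂) h with h' | h' | h'
      exacts [Or.inl h', Or.inr h', absurd h' h3]
    have h3γ : leapAdj 1 2 ((3:ℤ),(3:ℤ)) (f (z.1, (2:ℤ))) := by
      have := hadj z hz _ mt gt
      rwa [hfz] at this
    have hγ1 : f (z.1, (2:ℤ)) ≠ ((1:ℤ),(2:ℤ)) := by
      intro hcon
      have : (z.1, (2:ℤ)) = b₁ := hinj mt hb₁ (hcon.trans hfb₁.symm)
      simp [Prod.ext_iff] at this
      omega
    have hγ2 : f (z.1, (2:ℤ)) ≠ ((2:ℤ),(1:ℤ)) := by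
      intro hcon
      have : (z.1, (2:ℤ)) = b₂ := hinj mt hb₂ (hcon.trans hfb₂.symm)
      simp [Prod.ext_iff] at this
      omega
    exact gamma_contradiction h3γ hγ1 hγ2 is₁ is₂
      (hadj _ mt _ ms₁ gts₁) (hadj _ mt _ ms₂ gts₂)
  · -- z is the inner neighbour of b₁
    have hcB : (b₂.1 = 1 ∧ b₂.2 = 2 ∧ b₁.1 = 2) ∨
        (b₂.1 = (n : ℤ) ∧ b₂.2 = 2 ∧ b₁.1 = (n : ℤ) - 1) := by
      rw [not_and_or, not_or, not_or] at hnc₂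
      omega
    rcases hcB with ⟨h1, h2, h3⟩ | ⟨h1, h2, h3⟩
    · have hw : ((1:ℤ),(1:ℤ)) ∈ box n := by rw [mem_box_iff]; constructor <;> simp <;> omega
      have hwc := corner_to_corner hn2 hbox hinj hadj hw (by simp)
      have hl := hadj _ hw _ hb₂ (by simp [gridAdj_iff] <;> omega)
      rw [hfb₂] at hl
      exact corner_not_adj_12_21 hn hwc (Or.inr rfl) hl
    · have hw : ((n:ℤ),(1:ℤ)) ∈ box n := by rw [mem_box_iff]; constructor <;> simp <;> omega
      have hwc := corner_to_corner hn2 hbox hinj hadj hw (by simp)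
      have hl := hadj _ hw _ hb₂ (by simp [gridAdj_iff] <;> omega)
      rw [hfb₂] at hl
      exact corner_not_adj_12_21 hn hwc (Or.inr rfl) hl

lemma comp_main {n : ℕ} (hn : 4 ≤ n) {f : ℤ × ℤ → ℤ × ℤ}
    (hbox : ∀ v ∈ box n, f v ∈ box n) (hinj : Set.InjOn f (box n))
    (hadj : ∀ a ∈ box n, ∀ b ∈ box n, gridAdj a b → leapAdj 1 2 (f a) (f b))
    (h : ℤ × ℤ → ℤ × ℤ)
    (hmem : ∀ v ∈ box n, h v ∈ box n)
    (hga : ∀ a ∈ box n, ∀ b ∈ box n, gridAdj a b → gridAdj (h a) (h b))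
    (hinjh : Set.InjOn h (box n))
    {p : ℤ × ℤ} (hp : p ∈ box n) (hp2 : p.2 = 1) (hfp : f (h p) = ((1:ℤ),(2:ℤ))) :
    False := by
  refine main_case hn (f := f ∘ h) ?_ ?_ ?_ hp hfp hp2
  · exact fun v hv => hbox _ (hmem v hv)
  · exact Set.InjOn.comp hinj hinjh hmem
  · exact fun a ha b hb g => hadj _ (hmem a ha) _ (hmem b hb) (hga a ha b hb g)

/-- There is no embedding of the grid graph `□_n` into the knight graph `K_n` for `n ≥ 2`. -/
theorem no_perfect_knight_embedding (n : ℕ) (hn : 2 ≤ n) :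
    ¬ ∃ f : ℤ × ℤ → ℤ × ℤ,
        (∀ v ∈ box n, f v ∈ box n) ∧
        Set.InjOn f (box n) ∧
        (∀ a ∈ box n, ∀ b ∈ box n, gridAdj a b → leapAdj 1 2 (f a) (f b)) := by
  rintro ⟨f, hbox, hinj, hadj⟩
  have hcase : n = 2 ∨ n = 3 ∨ 4 ≤ n := by omega
  rcases hcase with rfl | rfl | hn4
  · -- n = 2
    have m1 : ((1:ℤ),(1:ℤ)) ∈ box 2 := by rw [mem_box_iff]; norm_num
    have m2 : ((1:ℤ),(2:ℤ)) ∈ box 2 := by rw [mem_box_iff]; norm_num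
    have h := hadj _ m1 _ m2 (by simp [gridAdj_iff] <;> omega)
    have i1 := mem_box_iff.1 (hbox _ m1)
    have i2 := mem_box_iff.1 (hbox _ m2)
    rw [leapAdj_iff] at h
    push_cast at i1 i2
    omega
  · -- n = 3
    have hA : ((1:ℤ),(1:ℤ)) ∈ box 3 := by rw [mem_box_iff]; norm_num
    obtain ⟨u, hu, hfu⟩ := exists_preimage hbox hinj hA
    have hnbr : ∀ r ∈ box 3, leapAdj 1 2 ((1:ℤ),(1:ℤ)) r →
        r = ((2:ℤ),(3:ℤ)) ∨ r = ((3:ℤ),(2:ℤ)) := by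
      intro r hr h
      rw [leapAdj_iff] at h
      rw [mem_box_iff] at hr
      simp only [Prod.ext_iff]
      omega
    -- helper for non-corner positions of u
    have key3 : ∀ p₁ p₂ p₃ : ℤ × ℤ, p₁ ∈ box 3 → p₂ ∈ box 3 → p₃ ∈ box 3 →
        p₁ ≠ p₂ → p₁ ≠ p₃ → p₂ ≠ p₃ →
        gridAdj u p₁ → gridAdj u p₂ → gridAdj u p₃ → False := by
      intro p₁ p₂ p₃ hp₁ hp₂ hp₃ n12 n13 n23 g1 g2 g3
      have i1 : f p₁ = ((2:ℤ),(3:ℤ)) ∨ f p₁ = ((3:ℤ),(2:ℤ)) := by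
        refine hnbr _ (hbox _ hp₁) ?_
        have := hadj u hu _ hp₁ g1; rwa [hfu] at this
      have i2 : f p₂ = ((2:ℤ),(3:ℤ)) ∨ f p₂ = ((3:ℤ),(2:ℤ)) := by
        refine hnbr _ (hbox _ hp₂) ?_
        have := hadj u hu _ hp₂ g2; rwa [hfu] at this
      have i3 : f p₃ = ((2:ℤ),(3:ℤ)) ∨ f p₃ = ((3:ℤ),(2:ℤ)) := by
        refine hnbr _ (hbox _ hp₃) ?_
        have := hadj u hu _ hp₃ g3; rwa [hfu] at this
      exact three_in_pair (inj_ne hinj hp₁ hp₂ n12) (inj_ne hinj hp₁ hp₃ n13)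
        (inj_ne hinj hp₂ hp₃ n23) i1 i2 i3
    -- helper for corner positions of u
    have ckey : ∀ a b w : ℤ × ℤ, a ∈ box 3 → b ∈ box 3 → w ∈ box 3 → a ≠ b → w ≠ u →
        gridAdj u a → gridAdj u b → gridAdj a w → gridAdj b w → False := by
      intro a b w ha hb hw nab nwu ga gb gaw gbw
      have ia : f a = ((2:ℤ),(3:ℤ)) ∨ f a = ((3:ℤ),(2:ℤ)) := by
        refine hnbr _ (hbox _ ha) ?_
        have := hadj u hu _ ha ga; rwa [hfu] at this
      have ib : f b = ((2:ℤ),(3:ℤ)) ∨ f b = ((3:ℤ),(2:ℤ)) := by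
        refine hnbr _ (hbox _ hb) ?_
        have := hadj u hu _ hb gb; rwa [hfu] at this
      have hab : f a ≠ f b := inj_ne hinj ha hb nab
      have law : leapAdj 1 2 (f a) (f w) := hadj _ ha _ hw gaw
      have lbw : leapAdj 1 2 (f b) (f w) := hadj _ hb _ hw gbw
      have hfw : f w ≠ ((1:ℤ),(1:ℤ)) := by
        intro hcon
        exact nwu (hinj hw hu (hcon.trans hfu.symm))
      have hfwm := mem_box_iff.1 (hbox _ hw)
      rw [leapAdj_iff] at law lbw
      rw [ne_eq, Prod.ext_iff, not_and_or] at hfw hab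
      rcases ia with h1 | h1 <;> rcases ib with h2 | h2 <;> rw [h1] at law hab <;>
        rw [h2] at lbw hab <;> simp_all <;> omega
    have hum := mem_box_iff.1 hu
    obtain ⟨ux, uy⟩ := u
    simp only at hum
    have h1 : (1:ℤ) ≤ ux := hum.1
    have h2 : ux ≤ (3:ℤ) := by exact_mod_cast hum.2.1
    have h3 : (1:ℤ) ≤ uy := hum.2.2.1
    have h4 : uy ≤ (3:ℤ) := by exact_mod_cast hum.2.2.2
    have hbx : ∀ a b : ℤ, 1 ≤ a → a ≤ 3 → 1 ≤ b → b ≤ 3 → ((a,b) : ℤ × ℤ) ∈ box 3 := by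
      intro a b h1 h2 h3 h4; rw [mem_box_iff]; norm_num; omega
    interval_cases ux <;> interval_cases uy
    · exact ckey (2,1) (1,2) (2,2) (hbx _ _ (by norm_num) (by norm_num) (by norm_num) (by norm_num))
        (hbx _ _ (by norm_num) (by norm_num) (by norm_num) (by norm_num))
        (hbx _ _ (by norm_num) (by norm_num) (by norm_num) (by norm_num))
        (by simp [Prod.ext_iff] <;> omega) (by simp [Prod.ext_iff] <;> omega)
        (by simp [gridAdj_iff] <;> omega) (by simp [gridAdj_iff] <;> omega) (by simp [gridAdj_iff] <;> omega) (by simp [gridAdj_iff] <;> omega)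
    · exact key3 (1,1) (1,3) (2,2) (hbx _ _ (by norm_num) (by norm_num) (by norm_num) (by norm_num))
        (hbx _ _ (by norm_num) (by norm_num) (by norm_num) (by norm_num))
        (hbx _ _ (by norm_num) (by norm_num) (by norm_num) (by norm_num))
        (by simp [Prod.ext_iff] <;> omega) (by simp [Prod.ext_iff] <;> omega) (by simp [Prod.ext_iff] <;> omega)
        (by simp [gridAdj_iff] <;> omega) (by simp [gridAdj_iff] <;> omega) (by simp [gridAdj_iff] <;> omega)
    · exact ckey (2,3) (1,2) (2,2) (hbx _ _ (by norm_num) (by norm_num) (by norm_num) (by norm_num))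
        (hbx _ _ (by norm_num) (by norm_num) (by norm_num) (by norm_num))
        (hbx _ _ (by norm_num) (by norm_num) (by norm_num) (by norm_num))
        (by simp [Prod.ext_iff] <;> omega) (by simp [Prod.ext_iff] <;> omega)
        (by simp [gridAdj_iff] <;> omega) (by simp [gridAdj_iff] <;> omega) (by simp [gridAdj_iff] <;> omega) (by simp [gridAdj_iff] <;> omega)
    · exact key3 (1,1) (3,1) (2,2) (hbx _ _ (by norm_num) (by norm_num) (by norm_num) (by norm_num))
        (hbx _ _ (by norm_num) (by norm_num) (by norm_num) (by norm_num))
        (hbx _ _ (by norm_num) (by norm_num) (by norm_num) (by norm_num))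
        (by simp [Prod.ext_iff] <;> omega) (by simp [Prod.ext_iff] <;> omega) (by simp [Prod.ext_iff] <;> omega)
        (by simp [gridAdj_iff] <;> omega) (by simp [gridAdj_iff] <;> omega) (by simp [gridAdj_iff] <;> omega)
    · exact key3 (2,1) (2,3) (1,2) (hbx _ _ (by norm_num) (by norm_num) (by norm_num) (by norm_num))
        (hbx _ _ (by norm_num) (by norm_num) (by norm_num) (by norm_num))
        (hbx _ _ (by norm_num) (by norm_num) (by norm_num) (by norm_num))
        (by simp [Prod.ext_iff] <;> omega) (by simp [Prod.ext_iff] <;> omega) (by simp [Prod.ext_iff] <;> omega)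
        (by simp [gridAdj_iff] <;> omega) (by simp [gridAdj_iff] <;> omega) (by simp [gridAdj_iff] <;> omega)
    · exact key3 (1,3) (3,3) (2,2) (hbx _ _ (by norm_num) (by norm_num) (by norm_num) (by norm_num))
        (hbx _ _ (by norm_num) (by norm_num) (by norm_num) (by norm_num))
        (hbx _ _ (by norm_num) (by norm_num) (by norm_num) (by norm_num))
        (by simp [Prod.ext_iff] <;> omega) (by simp [Prod.ext_iff] <;> omega) (by simp [Prod.ext_iff] <;> omega)
        (by simp [gridAdj_iff] <;> omega) (by simp [gridAdj_iff] <;> omega) (by simp [gridAdj_iff] <;> omega)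
    · exact ckey (2,1) (3,2) (2,2) (hbx _ _ (by norm_num) (by norm_num) (by norm_num) (by norm_num))
        (hbx _ _ (by norm_num) (by norm_num) (by norm_num) (by norm_num))
        (hbx _ _ (by norm_num) (by norm_num) (by norm_num) (by norm_num))
        (by simp [Prod.ext_iff] <;> omega) (by simp [Prod.ext_iff] <;> omega)
        (by simp [gridAdj_iff] <;> omega) (by simp [gridAdj_iff] <;> omega) (by simp [gridAdj_iff] <;> omega) (by simp [gridAdj_iff] <;> omega)
    · exact key3 (3,1) (3,3) (2,2) (hbx _ _ (by norm_num) (by norm_num) (by norm_num) (by norm_num))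
        (hbx _ _ (by norm_num) (by norm_num) (by norm_num) (by norm_num))
        (hbx _ _ (by norm_num) (by norm_num) (by norm_num) (by norm_num))
        (by simp [Prod.ext_iff] <;> omega) (by simp [Prod.ext_iff] <;> omega) (by simp [Prod.ext_iff] <;> omega)
        (by simp [gridAdj_iff] <;> omega) (by simp [gridAdj_iff] <;> omega) (by simp [gridAdj_iff] <;> omega)
    · exact ckey (2,3) (3,2) (2,2) (hbx _ _ (by norm_num) (by norm_num) (by norm_num) (by norm_num))
        (hbx _ _ (by norm_num) (by norm_num) (by norm_num) (by norm_num))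
        (hbx _ _ (by norm_num) (by norm_num) (by norm_num) (by norm_num))
        (by simp [Prod.ext_iff] <;> omega) (by simp [Prod.ext_iff] <;> omega)
        (by simp [gridAdj_iff] <;> omega) (by simp [gridAdj_iff] <;> omega) (by simp [gridAdj_iff] <;> omega) (by simp [gridAdj_iff] <;> omega)
  · -- n ≥ 4
    have hn2 : 2 ≤ n := by omega
    have hn' : (4 : ℤ) ≤ (n : ℤ) := by exact_mod_cast hn4
    have h12box : ((1:ℤ),(2:ℤ)) ∈ box n := by rw [mem_box_iff]; constructor <;> simp <;> omega
    obtain ⟨b₁, hb₁, hfb₁⟩ := exists_preimage hbox hinj h12box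
    have hb₁m := mem_box_iff.1 hb₁
    have hbd₁ := border_of_three hbox hinj hadj (nbrs12 (n := n)) hb₁ hfb₁
    rcases hbd₁ with h | h | h | h
    · -- b₁.1 = 1 : use (x,y) ↦ (y,x)
      refine comp_main hn4 hbox hinj hadj (fun v => (v.2, v.1)) ?_ ?_ ?_
        (p := (b₁.2, b₁.1)) ?_ (by simp [h]) ?_
      · intro v hv; rw [mem_box_iff] at hv ⊢; simp; omega
      · intro a ha b hb g; rw [gridAdj_iff] at g ⊢; simp; omega
      · intro a ha b hb hab; simp [Prod.ext_iff] at hab; exact Prod.ext_iff.2 ⟨hab.2, hab.1⟩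
      · rw [mem_box_iff] at *; simp; omega
      · simp [← hfb₁]
    · -- b₁.1 = n : use (x,y) ↦ (n+1-y, x), p = (b₁.2, 1)
      refine comp_main hn4 hbox hinj hadj (fun v => ((n : ℤ) + 1 - v.2, v.1)) ?_ ?_ ?_
        (p := (b₁.2, 1)) ?_ rfl ?_
      · intro v hv; rw [mem_box_iff] at hv ⊢; simp; omega
      · intro a ha b hb g; rw [gridAdj_iff] at g ⊢; simp; omega
      · intro a ha b hb hab; simp [Prod.ext_iff] at hab; exact Prod.ext_iff.2 ⟨hab.2, by omega⟩
      · rw [mem_box_iff] at *; simp; omega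
      · have : (((n : ℤ) + 1 - 1, b₁.2) : ℤ × ℤ) = b₁ := by
          rw [Prod.ext_iff]; simp; omega
        simp only [this, hfb₁]
    · -- b₁.2 = 1 : direct
      exact main_case hn4 hbox hinj hadj hb₁ hfb₁ h
    · -- b₁.2 = n : use (x,y) ↦ (x, n+1-y), p = (b₁.1, 1)
      refine comp_main hn4 hbox hinj hadj (fun v => (v.1, (n : ℤ) + 1 - v.2)) ?_ ?_ ?_
        (p := (b₁.1, 1)) ?_ rfl ?_
      · intro v hv; rw [mem_box_iff] at hv ⊢; simp; omega
      · intro a ha b hb g; rw [gridAdj_iff] at g ⊢; simp; omega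
      · intro a ha b hb hab; simp [Prod.ext_iff] at hab; exact Prod.ext_iff.2 ⟨hab.1, by omega⟩
      · rw [mem_box_iff] at *; simp; omega
      · have : ((b₁.1, (n : ℤ) + 1 - 1) : ℤ × ℤ) = b₁ := by
          rw [Prod.ext_iff]; simp; omega
        simp only [this, hfb₁]
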